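/- The dual problem attains its minimum: there exist u* ∈ ℝ^m, y^{(t),*} ∈ ℝ^m, z^{(t),*} ∈ ℝ^{m_t}, V^{(t),*} ∈ ℝ^{m×m_t} feasible for the dual problem such that max_{1≤i≤m} u*_i + ∑_{t=1}^N ⟨z^{(t),*}, a^{(t)}⟩ ≤ max_{1≤i≤m} u_i + ∑_{t=1}^N ⟨z^{(t)}, a^{(t)}⟩ for every feasible (u, {y^{(t)}}, {z^{(t)}}, {V^{(t)}}). -/

import Mathlib

/-- Feasibility for the dual problem: `∑_t y^{(t)} = u` and
`V^{(t)} = D^{(t)} + y^{(t)} e_{m_t}ᵀ + e_m (z^{(t)})ᵀ ≥ 0` for every `t`. -/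
def DualFeasible (N m : ℕ) (mt : Fin N → ℕ)
    (D : ∀ t : Fin N, Matrix (Fin m) (Fin (mt t)) ℝ)
    (u : Fin m → ℝ) (y : Fin N → Fin m → ℝ)
    (z : ∀ t : Fin N, Fin (mt t) → ℝ)
    (V : ∀ t : Fin N, Matrix (Fin m) (Fin (mt t)) ℝ) : Prop :=
  (∀ i, ∑ t, y t i = u i) ∧
    ∀ t : Fin N,
      (∀ i j, V t i j = D t i j + y t i + z t j) ∧
      (∀ i j, 0 ≤ V t i j)

/-- The dual objective `max_{1≤i≤m} u_i + ∑_t ⟨z^{(t)}, a^{(t)}⟩`. -/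
noncomputable def dualObj (N m : ℕ) (mt : Fin N → ℕ)
    (a : ∀ t : Fin N, Fin (mt t) → ℝ)
    (u : Fin m → ℝ) (z : ∀ t : Fin N, Fin (mt t) → ℝ) : ℝ :=
  (⨆ i, u i) + ∑ t, ∑ j, z t j * a t j

/-- the dual problem attains its minimum. -/
theorem stmt_3 (N m : ℕ) (hN : 0 < N) (hm : 0 < m)
    (mt : Fin N → ℕ) (hmt : ∀ t, 0 < mt t)
    (D : ∀ t : Fin N, Matrix (Fin m) (Fin (mt t)) ℝ)
    (a : ∀ t : Fin N, Fin (mt t) → ℝ)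
    (ha : ∀ t j, 0 ≤ a t j) (hasum : ∀ t, ∑ j, a t j = 1) :
    ∃ (ustar : Fin m → ℝ) (ystar : Fin N → Fin m → ℝ)
      (zstar : ∀ t : Fin N, Fin (mt t) → ℝ)
      (Vstar : ∀ t : Fin N, Matrix (Fin m) (Fin (mt t)) ℝ),
      DualFeasible N m mt D ustar ystar zstar Vstar ∧
      ∀ (u : Fin m → ℝ) (y : Fin N → Fin m → ℝ)
        (z : ∀ t : Fin N, Fin (mt t) → ℝ)
        (V : ∀ t : Fin N, Matrix (Fin m) (Fin (mt t)) ℝ),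
        DualFeasible N m mt D u y z V →
        dualObj N m mt a ustar zstar ≤ dualObj N m mt a u z := by
  classical
  haveI : Nonempty (Fin m) := ⟨⟨0, hm⟩⟩
  have uNE : ∀ t : Fin N, (Finset.univ : Finset (Fin (mt t))).Nonempty :=
    fun t => ⟨⟨0, hmt t⟩, Finset.mem_univ _⟩
  have mNE : (Finset.univ : Finset (Fin m)).Nonempty := ⟨⟨0, hm⟩, Finset.mem_univ _⟩
  -- S z t i : the minimal feasible `y t i` given `z`
  set S : (∀ t : Fin N, Fin (mt t) → ℝ) → Fin N → Fin m → ℝ :=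
    fun z t i => Finset.univ.sup' (uNE t) (fun j => -D t i j - z t j) with hS
  -- h : the objective as a function of z alone
  set h : (∀ t : Fin N, Fin (mt t) → ℝ) → ℝ :=
    fun z => Finset.univ.sup' mNE (fun i => ∑ t, S z t i) + ∑ t, ∑ j, z t j * a t j with hh
  -- Relating sup' over univ to ciSup
  have sup'_eq : ∀ u : Fin m → ℝ, Finset.univ.sup' mNE u = ⨆ i, u i := by
    intro u
    have := Finset.sup'_univ_eq_ciSup u
    convert this using 2
  -- h z equals the dual objective of the canonically constructed feasible point
  have hobj : ∀ z, dualObj N m mt a (fun i => ∑ t, S z t i) z = h z := by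
    intro z
    simp only [dualObj, hh, ← sup'_eq]
  -- the constructed point is feasible
  have hfeas : ∀ z, DualFeasible N m mt D (fun i => ∑ t, S z t i) (fun t i => S z t i) z
      (fun t i j => D t i j + S z t i + z t j) := by
    intro z
    refine ⟨fun i => rfl, fun t => ⟨fun i j => rfl, fun i j => ?_⟩⟩
    have h1 : -D t i j - z t j ≤ S z t i :=
      Finset.le_sup' (fun j => -D t i j - z t j) (Finset.mem_univ j)
    show 0 ≤ D t i j + S z t i + z t j
    linarith
  -- lower bound: every feasible point has objective at least h z
  have hlb : ∀ u y z V, DualFeasible N m mt D u y z V → h z ≤ dualObj N m mt a u z := by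
    intro u y z V ⟨hsum, hV⟩
    have key : Finset.univ.sup' mNE (fun i => ∑ t, S z t i) ≤ ⨆ i, u i := by
      apply Finset.sup'_le
      intro i _
      have h1 : ∑ t, S z t i ≤ u i := by
        rw [← hsum i]
        apply Finset.sum_le_sum
        intro t _
        apply Finset.sup'_le
        intro j _
        have h2 := (hV t).2 i j
        rw [(hV t).1 i j] at h2
        linarith
      exact h1.trans (le_ciSup (Set.Finite.bddAbove (Set.finite_range u)) i)
    simp only [dualObj, hh]
    linarith
  -- bound on |D|
  set B : Fin N → ℝ := fun t =>
    Finset.univ.sup' mNE (fun i => Finset.univ.sup' (uNE t) (fun j => |D t i j|)) with hB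
  have hDB : ∀ t i j, |D t i j| ≤ B t := by
    intro t i j
    calc |D t i j| ≤ Finset.univ.sup' (uNE t) (fun j => |D t i j|) :=
          Finset.le_sup' (fun j => |D t i j|) (Finset.mem_univ j)
      _ ≤ B t := Finset.le_sup'
          (fun i => Finset.univ.sup' (uNE t) (fun j => |D t i j|)) (Finset.mem_univ i)
  have hB0 : ∀ t, 0 ≤ B t := fun t =>
    le_trans (abs_nonneg _) (hDB t ⟨0, hm⟩ ⟨0, hmt t⟩)
  -- the compact box
  set C : Set (∀ t : Fin N, Fin (mt t) → ℝ) :=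
    Set.univ.pi (fun t => Set.univ.pi (fun _ => Set.Icc (0:ℝ) (2 * B t))) with hC
  have hCcompact : IsCompact C := isCompact_univ_pi fun t => isCompact_univ_pi fun _ => isCompact_Icc
  have hCne : C.Nonempty := by
    refine ⟨fun t _ => 0, ?_⟩
    intro t _
    intro j _
    refine ⟨le_refl _, ?_⟩
    show (0:ℝ) ≤ 2 * B t
    linarith [hB0 t]
  -- reduction: every z is dominated by a point of C
  have hred : ∀ z, ∃ z' ∈ C, h z' ≤ h z := by
    intro z
    set s : Fin N → ℝ := fun t => Finset.univ.inf' (uNE t) (z t) with hs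
    have hsle : ∀ t j, s t ≤ z t j := fun t j => Finset.inf'_le _ (Finset.mem_univ j)
    have hsmem : ∀ t, ∃ j0, s t = z t j0 := by
      intro t
      obtain ⟨j0, _, hj0⟩ := Finset.exists_mem_eq_inf' (uNE t) (z t)
      exact ⟨j0, hj0⟩
    set z' : ∀ t : Fin N, Fin (mt t) → ℝ := fun t j => min (z t j - s t) (2 * B t) with hz'
    have hmemC : z' ∈ C := by
      intro t _
      intro j _
      constructor
      · exact le_min (by linarith [hsle t j]) (by linarith [hB0 t])
      · exact min_le_right _ _
    refine ⟨z', hmemC, ?_⟩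
    -- claim 1: S z' t i ≤ S z t i + s t
    have claim1 : ∀ t i, S z' t i ≤ S z t i + s t := by
      intro t i
      apply Finset.sup'_le
      intro j _
      show -D t i j - z' t j ≤ S z t i + s t
      obtain ⟨j0, hj0⟩ := hsmem t
      have hSz : -D t i j0 - z t j0 ≤ S z t i :=
        Finset.le_sup' (fun j => -D t i j - z t j) (Finset.mem_univ j0)
      rcases le_or_gt (z t j - s t) (2 * B t) with hc | hc
      · have he : z' t j = z t j - s t := min_eq_left hc
        have h5 : -D t i j - z t j ≤ S z t i :=
          Finset.le_sup' (fun j => -D t i j - z t j) (Finset.mem_univ j)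
        rw [he]
        linarith
      · have hzj : z' t j = 2 * B t := min_eq_right hc.le
        rw [hzj]
        have h1 : -D t i j ≤ B t := by
          have := (abs_le.mp (hDB t i j)).1; linarith
        have h2 : -(B t) ≤ -D t i j0 := by
          have := (abs_le.mp (hDB t i j0)).2; linarith
        -- -D t i j - 2B ≤ -B ≤ -D t i j0 = (-D t i j0 - z t j0) + s t ≤ S z t i + s t
        linarith [hSz, hj0, hB0 t]
    -- claim 2: ∑ z' a ≤ ∑ z a - s t
    have claim2 : ∀ t, ∑ j, z' t j * a t j ≤ (∑ j, z t j * a t j) - s t := by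
      intro t
      have : ∑ j, z' t j * a t j ≤ ∑ j, (z t j - s t) * a t j := by
        apply Finset.sum_le_sum
        intro j _
        exact mul_le_mul_of_nonneg_right (min_le_left _ _) (ha t j)
      calc ∑ j, z' t j * a t j ≤ ∑ j, (z t j - s t) * a t j := this
        _ = (∑ j, z t j * a t j) - s t * ∑ j, a t j := by
            rw [Finset.mul_sum, ← Finset.sum_sub_distrib]
            congr 1; funext j; ring
        _ = (∑ j, z t j * a t j) - s t := by rw [hasum t, mul_one]
    -- assemble
    have hsup : Finset.univ.sup' mNE (fun i => ∑ t, S z' t i) ≤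
        Finset.univ.sup' mNE (fun i => ∑ t, S z t i) + ∑ t, s t := by
      apply Finset.sup'_le
      intro i _
      have h1 : ∑ t, S z' t i ≤ ∑ t, (S z t i + s t) :=
        Finset.sum_le_sum fun t _ => claim1 t i
      have h2 : ∑ t, (S z t i + s t) = (∑ t, S z t i) + ∑ t, s t := Finset.sum_add_distrib
      have h3 : ∑ t, S z t i ≤ Finset.univ.sup' mNE (fun i => ∑ t, S z t i) :=
        Finset.le_sup' (fun i => ∑ t, S z t i) (Finset.mem_univ i)
      linarith
    have hsum2 : ∑ t, ∑ j, z' t j * a t j ≤ (∑ t, ∑ j, z t j * a t j) - ∑ t, s t := by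
      have := Finset.sum_le_sum (fun t (_ : t ∈ Finset.univ) => claim2 t)
      rw [Finset.sum_sub_distrib] at this
      exact this
    simp only [hh]
    linarith
  -- continuity of h
  have hcont : Continuous h := by
    have c1 : Continuous fun z : ∀ t : Fin N, Fin (mt t) → ℝ =>
        ∑ t, ∑ j, z t j * a t j := by
      apply continuous_finset_sum
      intro t _
      apply continuous_finset_sum
      intro j _
      exact Continuous.mul (by fun_prop) continuous_const
    have c2 : Continuous fun z : ∀ t : Fin N, Fin (mt t) → ℝ =>
        Finset.univ.sup' mNE (fun i => ∑ t, S z t i) := by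
      apply Continuous.finset_sup'_apply mNE
      intro i _
      apply continuous_finset_sum
      intro t _
      apply Continuous.finset_sup'_apply (uNE t)
      intro j _
      exact continuous_const.sub ((continuous_apply j).comp (continuous_apply t))
    exact c2.add c1
  -- minimize h on C
  obtain ⟨zstar, hzstarC, hmin⟩ := hCcompact.exists_isMinOn hCne hcont.continuousOn
  refine ⟨fun i => ∑ t, S zstar t i, fun t i => S zstar t i, zstar,
    fun t i j => D t i j + S zstar t i + zstar t j, hfeas zstar, ?_⟩
  intro u y z V hfz
  obtain ⟨z', hz'C, hz'le⟩ := hred z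
  calc dualObj N m mt a (fun i => ∑ t, S zstar t i) zstar = h zstar := hobj zstar
    _ ≤ h z' := hmin hz'C
    _ ≤ h z := hz'le
    _ ≤ dualObj N m mt a u z := hlb u y z V hfz
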